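/- Let V be a rational vector space (ℚ-vector space) and let I ⊆ V be a subset closed under the following 'divisibility' property coming from Minkowski sums: whenever x ∈ V and n ≥ 1 and n·x is a sum y₁ + ⋯ + yₙ with each yᵢ ∈ I, then x ∈ I. Then I is convex: for any y₁, …, yₙ ∈ I and rational coefficients λᵢ ≥ 0 with Σλᵢ = 1, the combination Σλᵢyᵢ lies in I. -/

import Mathlib

/-- If a subset `I` of a ℚ-vector space is closed under 'divisibility' for
Minkowski sums (whenever `n•x = y₁ + ⋯ + yₙ` with all `yᵢ ∈ I` then `x ∈ I`),
then `I` is convex: it is closed under rational convex combinations. -/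
theorem convex_of_minkowski_divisible {V : Type*} [AddCommGroup V] [Module ℚ V]
    (I : Set V)
    (hdiv : ∀ (n : ℕ), 1 ≤ n → ∀ x : V, ∀ y : Fin n → V,
      (∀ i, y i ∈ I) → (n : ℚ) • x = ∑ i, y i → x ∈ I) :
    ∀ (n : ℕ), 1 ≤ n → ∀ (y : Fin n → V) (lam : Fin n → ℚ),
      (∀ i, y i ∈ I) → (∀ i, 0 ≤ lam i) → (∑ i, lam i) = 1 →
      (∑ i, lam i • y i) ∈ I := by
  intro n hn y lam hyI hlam hsum
  set N : ℕ := ∏ i, (lam i).den with hN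
  have hdvd : ∀ i, (lam i).den ∣ N := fun i => Finset.dvd_prod_of_mem _ (Finset.mem_univ i)
  have hNpos : 0 < N := Finset.prod_pos (fun i _ => (lam i).pos)
  have key : ∀ i, ∃ a : ℕ, (a : ℚ) = lam i * N := by
    intro i
    obtain ⟨m, hm⟩ := hdvd i
    refine ⟨((lam i).num).toNat * m, ?_⟩
    have hnum : 0 ≤ (lam i).num := Rat.num_nonneg.mpr (hlam i)
    have hden : ((lam i).den : ℚ) ≠ 0 := Nat.cast_ne_zero.mpr (lam i).den_nz
    have hq : lam i * (lam i).den = (lam i).num := by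
      rw [Rat.mul_den_eq_num]
    have htn : (((lam i).num.toNat : ℕ) : ℚ) = ((lam i).num : ℚ) := by
      exact_mod_cast congrArg (fun z : ℤ => (z : ℚ)) (Int.toNat_of_nonneg hnum)
    push_cast
    rw [htn, hm]
    push_cast
    rw [← mul_assoc, hq]
  choose a ha using key
  have hsumA : ∑ i, a i = N := by
    have : ((∑ i, a i : ℕ) : ℚ) = (N : ℚ) := by
      push_cast
      rw [Finset.sum_congr rfl (fun i _ => ha i), ← Finset.sum_mul, hsum, one_mul]
    exact_mod_cast this
  classical
  set L : List V := (List.finRange n).flatMap (fun i => List.replicate (a i) (y i)) with hL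
  have hlen : L.length = N := by
    simp only [hL, List.length_flatMap, List.length_replicate]
    rw [← hsumA, Fin.sum_univ_def]
  have hLsum : L.sum = ∑ i, (a i) • y i := by
    rw [hL, List.flatMap, List.sum_flatten, List.map_map]
    rw [Fin.sum_univ_def]
    congr 1
    exact List.map_congr_left fun i _ => by simp [List.sum_replicate]
  have hmem : ∀ v ∈ L, v ∈ I := by
    intro v hv
    simp only [hL, List.mem_flatMap, List.mem_replicate] at hv
    obtain ⟨i, _, _, rfl⟩ := hv
    exact hyI i
  refine hdiv N hNpos (∑ i, lam i • y i) (fun j => L.get (Fin.cast hlen.symm j)) ?_ ?_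
  · intro j; exact hmem _ (L.get_mem _)
  · have hz : ∑ j : Fin N, L.get (Fin.cast hlen.symm j) = L.sum := by
      rw [Fin.sum_congr' L.get hlen.symm]
      conv_rhs => rw [← List.ofFn_get L, Fin.sum_ofFn]
    rw [hz, hLsum, Finset.smul_sum]
    refine Finset.sum_congr rfl fun i _ => ?_
    rw [smul_smul, mul_comm, ← ha i, Nat.cast_smul_eq_nsmul]
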